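/- Let 𝔽 be ℝ or ℂ, let Λ be an index set, and let x = (x_λ), y = (y_λ) be elements of c₀(Λ), the Banach space of essentially null families over Λ with the supremum norm ‖x‖∞ = sup_{λ∈Λ} |x_λ|. Then x and y form a parallel pair if and only if there exists λ ∈ Λ such that |conj(x_λ) · y_λ| = ‖x‖∞ · ‖y‖∞; and x and y form a TEA pair if and only if there exists λ ∈ Λ such that conj(x_λ) · y_λ = ‖x‖∞ · ‖y‖∞. -/

import Mathlib

open scoped ENNReal ZeroAtInfty

/-- Two vectors in a normed space over `𝕜` form a *parallel pair* if
`‖x + μ • y‖ = ‖x‖ + ‖y‖` for some scalar `μ` with `|μ| = 1`. -/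
def ParallelPair (𝕜 : Type*) {E : Type*} [RCLike 𝕜] [NormedAddCommGroup E] [NormedSpace 𝕜 E]
    (x y : E) : Prop :=
  ∃ μ : 𝕜, ‖μ‖ = 1 ∧ ‖x + μ • y‖ = ‖x‖ + ‖y‖

/-- Two vectors in a normed space form a *triangle equality attaining* (TEA) pair
if `‖x + y‖ = ‖x‖ + ‖y‖`. -/
def TEAPair {E : Type*} [NormedAddCommGroup E] (x y : E) : Prop :=
  ‖x + y‖ = ‖x‖ + ‖y‖

/-- Triangle equality in a scalar field `𝕜`: `‖a + b‖ = ‖a‖ + ‖b‖` iff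
`conj a * b = ‖a‖ * ‖b‖`. -/
theorem scalar_tea_aux {𝕜 : Type*} [RCLike 𝕜] (a b : 𝕜) :
    ‖a + b‖ = ‖a‖ + ‖b‖ ↔ (starRingEnd 𝕜) a * b = ((‖a‖ * ‖b‖ : ℝ) : 𝕜) := by
  have key : ‖a + b‖ ^ 2 = ‖a‖ ^ 2 + 2 * RCLike.re ((starRingEnd 𝕜) a * b) + ‖b‖ ^ 2 := by
    have := norm_add_sq (𝕜 := 𝕜) a b
    rwa [RCLike.inner_apply, mul_comm b] at this
  constructor
  · intro h
    set z := (starRingEnd 𝕜) a * b with hz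
    have h2 : ‖a + b‖ ^ 2 = (‖a‖ + ‖b‖) ^ 2 := by rw [h]
    have hre : RCLike.re z = ‖a‖ * ‖b‖ := by nlinarith [key, h2]
    have hnz : ‖z‖ = ‖a‖ * ‖b‖ := by rw [hz, norm_mul, RCLike.norm_conj]
    have him : RCLike.im z = 0 := by
      have h3 := RCLike.norm_sq_eq_def (z := z)
      nlinarith [h3, hre, hnz]
    have : z = ((RCLike.re z : ℝ) : 𝕜) := (RCLike.ext_iff.mpr ⟨by simp, by simp [him]⟩)
    rw [this, hre]
  · intro h
    have hre : RCLike.re ((starRingEnd 𝕜) a * b) = ‖a‖ * ‖b‖ := by rw [h]; simp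
    have h2 : ‖a + b‖ ^ 2 = (‖a‖ + ‖b‖) ^ 2 := by rw [key, hre]; ring
    have h3 := congrArg Real.sqrt h2
    rwa [Real.sqrt_sq (norm_nonneg _), Real.sqrt_sq (by positivity)] at h3

/-- On a discrete space, the sup norm of a `C₀` function is attained. -/
theorem c0_norm_attained_aux {𝕜 : Type*} [RCLike 𝕜] {Λ : Type*}
    [TopologicalSpace Λ] [DiscreteTopology Λ] [Nonempty Λ]
    (f : ZeroAtInftyContinuousMap Λ 𝕜) : ∃ l : Λ, ‖f l‖ = ‖f‖ := by
  have hle : ∀ l : Λ, ‖f l‖ ≤ ‖f‖ := fun l => by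
    have := BoundedContinuousFunction.norm_coe_le_norm f.toBCF l
    rwa [ZeroAtInftyContinuousMap.norm_toBCF_eq_norm] at this
  have hnorm_le : ∀ C : ℝ, 0 ≤ C → (∀ l, ‖f l‖ ≤ C) → ‖f‖ ≤ C := fun C hC h => by
    rw [← ZeroAtInftyContinuousMap.norm_toBCF_eq_norm]
    exact (BoundedContinuousFunction.norm_le hC).mpr h
  rcases eq_or_lt_of_le (norm_nonneg f) with h0 | hpos
  · obtain ⟨l⟩ := ‹Nonempty Λ›
    exact ⟨l, le_antisymm (h0 ▸ hle l) (h0 ▸ norm_nonneg (f l))⟩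
  · set ε := ‖f‖ / 2 with hε
    have hεpos : 0 < ε := by positivity
    have htend : Filter.Tendsto f (Filter.cocompact Λ) (nhds 0) := f.zero_at_infty'
    have := Metric.tendsto_nhds.mp htend ε hεpos
    rw [Filter.eventually_iff, Filter.mem_cocompact] at this
    obtain ⟨K, hK, hKsub⟩ := this
    have hKfin : K.Finite := hK.finite_of_discrete
    have hS : {l : Λ | ε ≤ ‖f l‖} ⊆ K := by
      intro l hl
      by_contra hlK
      have := hKsub hlK
      simp only [Set.mem_setOf_eq, dist_zero_right] at this hl
      linarith
    have hSfin : {l : Λ | ε ≤ ‖f l‖}.Finite := hKfin.subset hS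
    have hSne : {l : Λ | ε ≤ ‖f l‖}.Nonempty := by
      by_contra hne
      rw [Set.not_nonempty_iff_eq_empty] at hne
      have : ∀ l, ‖f l‖ ≤ ε := fun l => by
        by_contra hc
        exact absurd (Set.mem_setOf_eq ▸ le_of_not_ge hc : l ∈ {l : Λ | ε ≤ ‖f l‖})
          (hne ▸ Set.notMem_empty l)
      have := hnorm_le ε hεpos.le this
      linarith
    obtain ⟨l₀, hl₀, hmax'⟩ := Set.Finite.exists_maximalFor (fun l => ‖f l‖) _ hSfin hSne
    have hmax : ∀ l ∈ {l : Λ | ε ≤ ‖f l‖}, ‖f l₀‖ ≤ ‖f l‖ → ‖f l₀‖ = ‖f l‖ :=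
      fun l hl h => le_antisymm h (hmax' hl h)
    refine ⟨l₀, le_antisymm (hle l₀) (hnorm_le _ (norm_nonneg _) fun l => ?_)⟩
    by_cases hl : l ∈ {l : Λ | ε ≤ ‖f l‖}
    · rcases le_or_gt (‖f l‖) (‖f l₀‖) with h | h
      · exact h
      · exact (hmax l hl h.le).ge
    · simp only [Set.mem_setOf_eq, not_le] at hl
      exact hl.le.trans hl₀

/-- Degenerate triangle equality: if one vector has zero norm. -/
theorem tea_of_norm_mul_eq_zero {E : Type*} [SeminormedAddCommGroup E] (x y : E)
    (h : ‖x‖ * ‖y‖ = 0) : ‖x + y‖ = ‖x‖ + ‖y‖ := by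
  rcases mul_eq_zero.mp h with h | h
  · refine le_antisymm (norm_add_le x y) ?_
    have : ‖y‖ ≤ ‖x + y‖ + ‖x‖ := by
      calc ‖y‖ = ‖x + y - x‖ := by rw [add_sub_cancel_left]
        _ ≤ ‖x + y‖ + ‖x‖ := norm_sub_le _ _
    linarith
  · refine le_antisymm (norm_add_le x y) ?_
    have : ‖x‖ ≤ ‖x + y‖ + ‖y‖ := by
      calc ‖x‖ = ‖x + y - y‖ := by rw [add_sub_cancel_right]
        _ ≤ ‖x + y‖ + ‖y‖ := norm_sub_le _ _
    linarith

/-- TEA characterization in `c₀`. -/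
theorem c0_TEA_aux {𝕜 : Type*} [RCLike 𝕜] {Λ : Type*}
    [TopologicalSpace Λ] [DiscreteTopology Λ] [Nonempty Λ]
    (x y : ZeroAtInftyContinuousMap Λ 𝕜) :
    (‖x + y‖ = ‖x‖ + ‖y‖) ↔ ∃ l : Λ, (starRingEnd 𝕜) (x l) * y l = ((‖x‖ * ‖y‖ : ℝ) : 𝕜) := by
  have hle : ∀ (f : ZeroAtInftyContinuousMap Λ 𝕜) (l : Λ), ‖f l‖ ≤ ‖f‖ := fun f l => by
    have := BoundedContinuousFunction.norm_coe_le_norm f.toBCF l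
    rwa [ZeroAtInftyContinuousMap.norm_toBCF_eq_norm] at this
  constructor
  · intro h
    obtain ⟨l, hl⟩ := c0_norm_attained_aux (x + y)
    have happ : (x + y) l = x l + y l := rfl
    rw [happ, h] at hl
    have h1 : ‖x l‖ ≤ ‖x‖ := hle x l
    have h2 : ‖y l‖ ≤ ‖y‖ := hle y l
    have htri : ‖x l + y l‖ ≤ ‖x l‖ + ‖y l‖ := norm_add_le _ _
    have hx : ‖x l‖ = ‖x‖ := by linarith
    have hy : ‖y l‖ = ‖y‖ := by linarith
    have : ‖x l + y l‖ = ‖x l‖ + ‖y l‖ := by linarith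
    refine ⟨l, ?_⟩
    rw [← hx, ← hy]
    exact (scalar_tea_aux _ _).mp this
  · rintro ⟨l, hl⟩
    rcases eq_or_ne (‖x‖ * ‖y‖) 0 with h0 | h0
    · exact tea_of_norm_mul_eq_zero x y h0
    · have hnorm : ‖x l‖ * ‖y l‖ = ‖x‖ * ‖y‖ := by
        have := congrArg norm hl
        rwa [norm_mul, RCLike.norm_conj, RCLike.norm_ofReal,
          abs_of_nonneg (by positivity)] at this
      have h1 : ‖x l‖ ≤ ‖x‖ := hle x l
      have h2 : ‖y l‖ ≤ ‖y‖ := hle y l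
      have hxpos : 0 < ‖x‖ := by
        rcases (mul_ne_zero_iff.mp h0) with ⟨hx, _⟩
        exact lt_of_le_of_ne (norm_nonneg _) (Ne.symm hx)
      have hypos : 0 < ‖y‖ := by
        rcases (mul_ne_zero_iff.mp h0) with ⟨_, hy⟩
        exact lt_of_le_of_ne (norm_nonneg _) (Ne.symm hy)
      have hx : ‖x l‖ = ‖x‖ := by nlinarith [norm_nonneg (x l), norm_nonneg (y l)]
      have hy : ‖y l‖ = ‖y‖ := by nlinarith [norm_nonneg (x l), norm_nonneg (y l)]
      have hsc : ‖x l + y l‖ = ‖x l‖ + ‖y l‖ :=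
        (scalar_tea_aux _ _).mpr (by rw [hx, hy]; exact hl)
      have : ‖x‖ + ‖y‖ ≤ ‖x + y‖ := by
        calc ‖x‖ + ‖y‖ = ‖x l + y l‖ := by rw [hsc, hx, hy]
          _ = ‖(x + y) l‖ := rfl
          _ ≤ ‖x + y‖ := hle _ l
      exact le_antisymm (norm_add_le x y) this

/-- Parallel pair characterization in `c₀`. -/
theorem c0_parallel_aux {𝕜 : Type*} [RCLike 𝕜] {Λ : Type*}
    [TopologicalSpace Λ] [DiscreteTopology Λ] [Nonempty Λ]
    (x y : ZeroAtInftyContinuousMap Λ 𝕜) :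
    (∃ μ : 𝕜, ‖μ‖ = 1 ∧ ‖x + μ • y‖ = ‖x‖ + ‖y‖) ↔
      ∃ l : Λ, ‖(starRingEnd 𝕜) (x l) * y l‖ = ‖x‖ * ‖y‖ := by
  constructor
  · rintro ⟨μ, hμ, hpar⟩
    have hsm : ‖μ • y‖ = ‖y‖ := by rw [norm_smul μ y, hμ, one_mul]
    obtain ⟨l, hl⟩ := (c0_TEA_aux x (μ • y)).mp (by rw [hsm]; exact hpar)
    have happ : (μ • y) l = μ * y l := rfl
    rw [happ, hsm] at hl
    refine ⟨l, ?_⟩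
    have := congrArg norm hl
    rwa [RCLike.norm_ofReal, abs_of_nonneg (by positivity), norm_mul, norm_mul, hμ, one_mul,
      ← norm_mul] at this
  · rintro ⟨l, hl⟩
    rcases eq_or_ne (‖x‖ * ‖y‖) 0 with h0 | h0
    · exact ⟨1, norm_one, by rw [one_smul]; exact tea_of_norm_mul_eq_zero x y h0⟩
    · set c := (starRingEnd 𝕜) (x l) * y l with hc
      have hcne : c ≠ 0 := by
        intro h; rw [h, norm_zero] at hl; exact h0 hl.symm
      refine ⟨(‖c‖ : 𝕜) / c, ?_, ?_⟩
      · rw [norm_div, RCLike.norm_ofReal, abs_norm, div_self (norm_ne_zero_iff.mpr hcne)]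
      · have hsm : ‖((‖c‖ : 𝕜) / c) • y‖ = ‖y‖ := by
          rw [norm_smul ((‖c‖ : 𝕜) / c) y, norm_div, RCLike.norm_ofReal, abs_norm,
            div_self (norm_ne_zero_iff.mpr hcne), one_mul]
        have : ‖x + ((‖c‖ : 𝕜) / c) • y‖ = ‖x‖ + ‖((‖c‖ : 𝕜) / c) • y‖ := by
          refine (c0_TEA_aux x _).mpr ⟨l, ?_⟩
          have happ : (((‖c‖ : 𝕜) / c) • y) l = ((‖c‖ : 𝕜) / c) * y l := rfl
          have hcalc : (starRingEnd 𝕜) (x l) * (((‖c‖ : 𝕜) / c) * y l)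
              = ((‖c‖ : 𝕜) / c) * c := by rw [hc]; ring
          rw [happ, hcalc, div_mul_cancel₀ _ hcne, hsm, hl]
        rwa [hsm] at this

/-- For `x, y ∈ c₀(Λ)` (essentially null families over a nonempty index set `Λ`, realized
as `C₀(Λ, 𝕜)` for the discrete topology on `Λ`, with the sup norm): `x, y` are parallel
iff `|conj(x_λ) * y_λ| = ‖x‖∞ ‖y‖∞` for some `λ`; and `x, y` form a TEA pair iff
`conj(x_λ) * y_λ = ‖x‖∞ ‖y‖∞` for some `λ`. -/
theorem c0_parallel_TEA_characterization {𝕜 : Type*} [RCLike 𝕜] {Λ : Type*}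
    [TopologicalSpace Λ] [DiscreteTopology Λ] [Nonempty Λ]
    (x y : ZeroAtInftyContinuousMap Λ 𝕜) :
    (ParallelPair 𝕜 x y ↔ ∃ l : Λ, ‖(starRingEnd 𝕜) (x l) * y l‖ = ‖x‖ * ‖y‖) ∧
    (TEAPair x y ↔ ∃ l : Λ, (starRingEnd 𝕜) (x l) * y l = ((‖x‖ * ‖y‖ : ℝ) : 𝕜)) := by
  exact ⟨c0_parallel_aux x y, c0_TEA_aux x y⟩
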